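/- Let δ > 0 and let f : ℝ → ℝ be twice continuously differentiable on the open interval (0, δ) with f r > 0 for all r ∈ (0, δ), satisfying 2 * f r * deriv (deriv f) r = (deriv f r)^2 for all r ∈ (0, δ). If moreover f r → 1 and deriv f r → 0 as r → 0⁺ (limits along the filter 𝓝[>] 0), then f r = 1 for all r ∈ (0, δ). -/

import Mathlib

open Set Filter Topology

lemma const_of_hasDerivAt_zero' {s : Set ℝ} (hs : Convex ℝ s) (ho : IsOpen s) {g : ℝ → ℝ}
    (h : ∀ x ∈ s, HasDerivAt g 0 x) {x y : ℝ} (hx : x ∈ s) (hy : y ∈ s) : g x = g y := by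
  refine hs.is_const_of_fderivWithin_eq_zero
    (fun z hz => ((h z hz).differentiableAt).differentiableWithinAt) (fun z hz => ?_) hx hy
  rw [fderivWithin_of_isOpen ho hz, (h z hz).hasFDerivAt.fderiv]
  ext; simp

theorem ode_with_boundary_conditions_implies_constant_one
    (δ : ℝ) (hδ : 0 < δ) (f : ℝ → ℝ)
    (hf : ContDiffOn ℝ 2 f (Ioo 0 δ))
    (hpos : ∀ r ∈ Ioo 0 δ, 0 < f r)
    (hode : ∀ r ∈ Ioo 0 δ, 2 * f r * deriv (deriv f) r = (deriv f r) ^ 2)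
    (hf1 : Tendsto f (𝓝[>] 0) (𝓝 1))
    (hf'0 : Tendsto (deriv f) (𝓝[>] 0) (𝓝 0)) :
    ∀ r ∈ Ioo 0 δ, f r = 1 := by
  have hopen : IsOpen (Ioo (0:ℝ) δ) := isOpen_Ioo
  have hconv : Convex ℝ (Ioo (0:ℝ) δ) := convex_Ioo 0 δ
  -- f is differentiable at points of Ioo with derivative deriv f
  have hdf : ∀ r ∈ Ioo (0:ℝ) δ, HasDerivAt f (deriv f r) r := by
    intro r hr
    have := (hf.differentiableOn (by norm_num)).differentiableAt (hopen.mem_nhds hr)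
    exact this.hasDerivAt
  -- deriv f is C¹ on Ioo
  have hdf' : ContDiffOn ℝ 1 (deriv f) (Ioo 0 δ) :=
    hf.deriv_of_isOpen hopen (by norm_num)
  have hdf'' : ∀ r ∈ Ioo (0:ℝ) δ, HasDerivAt (deriv f) (deriv (deriv f) r) r := by
    intro r hr
    exact ((hdf'.differentiableOn (by norm_num)).differentiableAt (hopen.mem_nhds hr)).hasDerivAt
  -- the function g = f' / √f has derivative 0 on Ioo
  set g : ℝ → ℝ := fun r => deriv f r / Real.sqrt (f r) with hg
  have hgderiv : ∀ r ∈ Ioo (0:ℝ) δ, HasDerivAt g 0 r := by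
    intro r hr
    have hfr := hpos r hr
    have hsq : HasDerivAt (fun x => Real.sqrt (f x)) (1 / (2 * Real.sqrt (f r)) * deriv f r) r :=
      (Real.hasDerivAt_sqrt hfr.ne').comp r (hdf r hr)
    have hsqpos : 0 < Real.sqrt (f r) := Real.sqrt_pos.mpr hfr
    have h : HasDerivAt g _ r := (hdf'' r hr).div hsq hsqpos.ne'
    convert h using 1
    have hode' := hode r hr
    have hsqsq : Real.sqrt (f r) * Real.sqrt (f r) = f r := Real.mul_self_sqrt hfr.le
    have hd2 : deriv (deriv f) r = (deriv f r) ^ 2 / (2 * f r) := by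
      field_simp at hode' ⊢; linarith
    rw [hd2]
    field_simp
    linear_combination (-(deriv f r)^2) * hsqsq
  -- g is constant on Ioo, and tends to 0 at 0⁺, hence g = 0 on Ioo
  have hIoo_mem : Ioo (0:ℝ) δ ∈ 𝓝[>] (0:ℝ) := by
    apply Ioo_mem_nhdsGT_of_mem; exact ⟨le_refl 0, hδ⟩
  have hgzero : ∀ r ∈ Ioo (0:ℝ) δ, g r = 0 := by
    intro r hr
    -- g tends to 0 at 0⁺
    have hsqrt1 : Tendsto (fun x => Real.sqrt (f x)) (𝓝[>] 0) (𝓝 1) := by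
      have := (Real.continuous_sqrt.tendsto 1).comp hf1
      simpa [Function.comp_def] using this
    have hgl : Tendsto g (𝓝[>] 0) (𝓝 0) := by
      have := hf'0.div hsqrt1 one_ne_zero
      rw [div_one] at this; exact this
    -- g is eventually equal to the constant g r
    have hconst : ∀ᶠ x in 𝓝[>] (0:ℝ), g x = g r :=
      Filter.eventually_of_mem hIoo_mem fun x hx =>
        const_of_hasDerivAt_zero' hconv hopen hgderiv hx hr
    have : Tendsto (fun _ : ℝ => g r) (𝓝[>] (0:ℝ)) (𝓝 0) :=
      hgl.congr' (hconst.mono fun x hx => hx)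
    exact (tendsto_const_nhds_iff.mp this)
  -- hence deriv f = 0 on Ioo
  have hderiv0 : ∀ r ∈ Ioo (0:ℝ) δ, deriv f r = 0 := by
    intro r hr
    have h := hgzero r hr
    have : Real.sqrt (f r) ≠ 0 := (Real.sqrt_pos.mpr (hpos r hr)).ne'
    simp only [hg, div_eq_zero_iff, this, or_false] at h
    exact h
  -- f is constant on Ioo
  intro r hr
  have hfconst : ∀ x ∈ Ioo (0:ℝ) δ, f x = f r := fun x hx =>
    const_of_hasDerivAt_zero' hconv hopen
      (fun z hz => (hderiv0 z hz) ▸ hdf z hz) hx hr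
  have hconst : ∀ᶠ x in 𝓝[>] (0:ℝ), f x = f r :=
    Filter.eventually_of_mem hIoo_mem fun x hx => hfconst x hx
  have : Tendsto (fun _ : ℝ => f r) (𝓝[>] (0:ℝ)) (𝓝 1) :=
    hf1.congr' (hconst.mono fun x hx => hx)
  exact tendsto_const_nhds_iff.mp this
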